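/- Under Assumption 1, for every x ∈ V one has q(x) < 1 if and only if x ∈ Bᶜ and the set A is reachable from x. -/

import Mathlib

open scoped ENNReal

-- `pathProb p x l` : probability that the chain with transition matrix `p` follows the
-- finite path `x :: l` (here `p x y` is the probability `p(y|x)` of jumping from `x` to `y`).
noncomputable def pathProb {V : Type*} (p : V → V → ℝ) : V → List V → ℝ≥0∞
  | _, [] => 1
  | x, y :: ys => ENNReal.ofReal (p x y) * pathProb p y ys

-- The finite path lies outside `S ∪ T` at all nodes except its last one, which lies in `S`;
-- such paths realize exactly the event `τ_S < τ_T`.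
def HitsFirst {V : Type*} (S T : Finset V) : List V → Prop
  | [] => False
  | [x] => x ∈ S
  | x :: y :: ys => x ∉ S ∧ x ∉ T ∧ HitsFirst S T (y :: ys)

-- `hitProb p S T x` : the probability `P(τ_{S,x} < τ_{T,x})` that the chain started at `x`
-- hits `S` strictly before `T`, written as the sum over all first-passage paths to `S`.
open Classical in
noncomputable def hitProb {V : Type*} (p : V → V → ℝ) (S T : Finset V) (x : V) : ℝ≥0∞ :=
  ∑' l : List V, if HitsFirst S T (x :: l) then pathProb p x l else 0

section Aux

variable {V : Type*}

private lemma tsum_option_ennreal {β : Type*} (g : Option β → ℝ≥0∞) :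
    ∑' o : Option β, g o = g none + ∑' b : β, g (some b) := by
  rw [ENNReal.tsum_eq_add_tsum_ite (none : Option β)]
  congr 1
  refine tsum_eq_tsum_of_ne_zero_bij (fun b => some b.1) ?_ ?_ ?_
  · intro a b hab
    exact Subtype.ext (Option.some_injective _ hab)
  · rintro (_ | b) ho
    · simp [Function.mem_support] at ho
    · simp only [Function.mem_support, ne_eq] at ho
      refine ⟨⟨b, ?_⟩, rfl⟩
      simp only [Function.mem_support, ne_eq]
      intro h
      exact ho (by simp [h])
  · intro x
    simp

private def consEquiv (V : Type*) : Option (V × List V) ≃ List V where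
  toFun o := match o with
    | none => []
    | some (y, ys) => y :: ys
  invFun l := match l with
    | [] => none
    | y :: ys => some (y, ys)
  left_inv o := by rcases o with _ | ⟨y, ys⟩ <;> rfl
  right_inv l := by cases l <;> rfl

private lemma tsum_list_split (F : List V → ℝ≥0∞) :
    ∑' l : List V, F l = F [] + ∑' yz : V × List V, F (yz.1 :: yz.2) := by
  rw [← (consEquiv V).tsum_eq F, tsum_option_ennreal]
  congr 1

private lemma hitsFirst_single {S T : Finset V} {x : V} : HitsFirst S T [x] ↔ x ∈ S :=
  Iff.rfl

private lemma hitsFirst_cons {S T : Finset V} {x y : V} {ys : List V} :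
    HitsFirst S T (x :: y :: ys) ↔ x ∉ S ∧ x ∉ T ∧ HitsFirst S T (y :: ys) :=
  Iff.rfl


open Classical in
private lemma hitProb_of_mem (p : V → V → ℝ) {S T : Finset V} {x : V} (hx : x ∈ S) :
    hitProb p S T x = 1 := by
  rw [hitProb, tsum_eq_single ([] : List V)]
  · rw [if_pos (hitsFirst_single.mpr hx)]
    rfl
  · intro l hl
    cases l with
    | nil => exact absurd rfl hl
    | cons y ys =>
      rw [if_neg]
      intro h
      exact (hitsFirst_cons.mp h).1 hx

open Classical in
private lemma hitProb_rec [Fintype V] (p : V → V → ℝ) (S T : Finset V) (x : V) :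
    hitProb p S T x = if x ∈ S then 1 else if x ∈ T then 0 else
      ∑ y : V, ENNReal.ofReal (p x y) * hitProb p S T y := by
  by_cases hxS : x ∈ S
  · rw [if_pos hxS, hitProb_of_mem p hxS]
  by_cases hxT : x ∈ T
  · rw [if_neg hxS, if_pos hxT, hitProb]
    convert tsum_zero with l
    cases l with
    | nil =>
      rw [if_neg]
      exact fun h => hxS (hitsFirst_single.mp h)
    | cons y ys =>
      rw [if_neg]
      exact fun h => (hitsFirst_cons.mp h).2.1 hxT
  · rw [if_neg hxS, if_neg hxT, hitProb,
      tsum_list_split (fun l => if HitsFirst S T (x :: l) then pathProb p x l else 0)]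
    rw [if_neg (fun h => hxS (hitsFirst_single.mp h)), zero_add, ENNReal.tsum_prod']
    rw [tsum_fintype]
    refine Finset.sum_congr rfl fun y _ => ?_
    rw [hitProb, ← ENNReal.tsum_mul_left]
    refine tsum_congr fun ys => ?_
    by_cases h : HitsFirst S T (y :: ys)
    · rw [if_pos (hitsFirst_cons.mpr ⟨hxS, hxT, h⟩), if_pos h]
      rfl
    · rw [if_neg (fun h' => h (hitsFirst_cons.mp h').2.2), if_neg h, mul_zero]

open Classical in
private noncomputable def hitApprox [Fintype V] [DecidableEq V] (p : V → V → ℝ)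
    (S T : Finset V) : ℕ → V → ℝ≥0∞
  | 0, x => if x ∈ S then 1 else 0
  | n + 1, x => if x ∈ S then 1 else if x ∈ T then 0 else
      ∑ y : V, ENNReal.ofReal (p x y) * hitApprox p S T n y

private lemma hitApprox_le_one [Fintype V] [DecidableEq V] {p : V → V → ℝ}
    (hp0 : ∀ x y, 0 ≤ p x y) (hp1 : ∀ x, ∑ y, p x y = 1) (S T : Finset V) :
    ∀ n x, hitApprox p S T n x ≤ 1 := by
  intro n
  induction n with
  | zero =>
    intro x
    rw [hitApprox]
    split <;> simp
  | succ n ih =>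
    intro x
    rw [hitApprox]
    split
    · exact le_refl 1
    split
    · exact zero_le_one
    calc ∑ y : V, ENNReal.ofReal (p x y) * hitApprox p S T n y
        ≤ ∑ y : V, ENNReal.ofReal (p x y) * 1 :=
          Finset.sum_le_sum fun y _ => mul_le_mul' le_rfl (ih y)
      _ = ENNReal.ofReal (∑ y, p x y) := by
          simp only [mul_one]
          rw [← ENNReal.ofReal_sum_of_nonneg (fun y _ => hp0 x y)]
      _ = 1 := by rw [hp1 x, ENNReal.ofReal_one]

open Classical in
private lemma hitApprox_eq [Fintype V] [DecidableEq V] (p : V → V → ℝ) (S T : Finset V) :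
    ∀ (n : ℕ) (x : V),
      (∑' l : List V, if HitsFirst S T (x :: l) ∧ l.length ≤ n then pathProb p x l else 0)
        = hitApprox p S T n x := by
  intro n
  induction n with
  | zero =>
    intro x
    rw [hitApprox, tsum_eq_single ([] : List V)]
    · by_cases hx : x ∈ S
      · rw [if_pos ⟨hitsFirst_single.mpr hx, by simp⟩, if_pos hx]
        rfl
      · rw [if_neg (fun h => hx (hitsFirst_single.mp h.1)), if_neg hx]
    · intro l hl
      cases l with
      | nil => exact absurd rfl hl
      | cons y ys =>
        rw [if_neg]
        rintro ⟨-, h⟩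
        simp at h
  | succ n ih =>
    intro x
    rw [hitApprox]
    by_cases hxS : x ∈ S
    · rw [if_pos hxS, tsum_eq_single ([] : List V)]
      · rw [if_pos ⟨hitsFirst_single.mpr hxS, by simp⟩]
        rfl
      · intro l hl
        cases l with
        | nil => exact absurd rfl hl
        | cons y ys =>
          rw [if_neg]
          rintro ⟨h, -⟩
          exact (hitsFirst_cons.mp h).1 hxS
    by_cases hxT : x ∈ T
    · rw [if_neg hxS, if_pos hxT]
      convert tsum_zero with l
      cases l with
      | nil =>
        rw [if_neg]
        exact fun h => hxS (hitsFirst_single.mp h.1)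
      | cons y ys =>
        rw [if_neg]
        exact fun h => (hitsFirst_cons.mp h.1).2.1 hxT
    · rw [if_neg hxS, if_neg hxT,
        tsum_list_split (fun l => if HitsFirst S T (x :: l) ∧ l.length ≤ n + 1
          then pathProb p x l else 0)]
      rw [if_neg (fun h => hxS (hitsFirst_single.mp h.1)), zero_add, ENNReal.tsum_prod']
      rw [tsum_fintype]
      refine Finset.sum_congr rfl fun y _ => ?_
      rw [← ih y, ← ENNReal.tsum_mul_left]
      refine tsum_congr fun ys => ?_
      by_cases h : HitsFirst S T (y :: ys) ∧ ys.length ≤ n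
      · rw [if_pos ⟨hitsFirst_cons.mpr ⟨hxS, hxT, h.1⟩, by simpa using h.2⟩, if_pos h]
        rfl
      · rw [if_neg, if_neg h, mul_zero]
        rintro ⟨h1, h2⟩
        exact h ⟨(hitsFirst_cons.mp h1).2.2, by simpa using h2⟩

open Classical in
private lemma hitProb_le_one [Fintype V] [DecidableEq V] {p : V → V → ℝ}
    (hp0 : ∀ x y, 0 ≤ p x y) (hp1 : ∀ x, ∑ y, p x y = 1) (S T : Finset V) (x : V) :
    hitProb p S T x ≤ 1 := by
  rw [hitProb, ENNReal.tsum_eq_iSup_sum]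
  refine iSup_le fun F => ?_
  set N := F.sup List.length with hN
  calc ∑ l ∈ F, (if HitsFirst S T (x :: l) then pathProb p x l else 0)
      ≤ ∑ l ∈ F, (if HitsFirst S T (x :: l) ∧ l.length ≤ N then pathProb p x l else 0) := by
        refine Finset.sum_le_sum fun l hl => ?_
        by_cases h : HitsFirst S T (x :: l)
        · rw [if_pos h, if_pos ⟨h, Finset.le_sup hl⟩]
        · rw [if_neg h]
          exact zero_le
    _ ≤ ∑' l : List V, (if HitsFirst S T (x :: l) ∧ l.length ≤ N then pathProb p x l else 0) :=
        ENNReal.sum_le_tsum F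
    _ = hitApprox p S T N x := hitApprox_eq p S T N x
    _ ≤ 1 := hitApprox_le_one hp0 hp1 S T N x


private lemma pos_of_path [Fintype V] [DecidableEq V] {p : V → V → ℝ} {A B : Finset V}
    (k : ℕ) (c : ℕ → V) (hck : c k ∈ A)
    (hint : ∀ l, 1 ≤ l → l ≤ k - 1 → c l ∉ A ∪ B)
    (hpos : ∀ l, l < k → 0 < p (c l) (c (l + 1)))
    (h0 : c 0 ∉ B) :
    0 < hitProb p A B (c 0) := by
  suffices h : ∀ j, j ≤ k → 0 < hitProb p A B (c (k - j)) by
    simpa using h k le_rfl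
  intro j
  induction j with
  | zero =>
    intro _
    rw [Nat.sub_zero, hitProb_of_mem p hck]
    exact one_pos
  | succ j ih =>
    intro hj
    have hj' : j ≤ k := Nat.le_of_succ_le hj
    have hlt : k - (j + 1) < k := by omega
    set l := k - (j + 1) with hl
    by_cases hA : c l ∈ A
    · rw [hitProb_of_mem p hA]
      exact one_pos
    · have hB : c l ∉ B := by
        rcases Nat.eq_zero_or_pos l with h0' | h1
        · rw [h0']
          exact h0
        · have := hint l h1 (by omega)
          simp only [Finset.mem_union, not_or] at this
          exact this.2
      have hrec := hitProb_rec p A B (c l)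
      rw [if_neg hA, if_neg hB] at hrec
      have hterm : 0 < ENNReal.ofReal (p (c l) (c (l + 1))) * hitProb p A B (c (l + 1)) := by
        have h1 : c (l + 1) = c (k - j) := by
          congr 1
          omega
        refine ENNReal.mul_pos ?_ ?_
        · exact (ENNReal.ofReal_pos.mpr (hpos l hlt)).ne'
        · rw [h1]
          exact (ih hj').ne'
      rw [hrec]
      refine lt_of_lt_of_le hterm ?_
      exact Finset.single_le_sum
        (f := fun y => ENNReal.ofReal (p (c l) y) * hitProb p A B y)
        (fun y _ => zero_le) (Finset.mem_univ (c (l + 1)))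

private lemma hitsFirst_union [DecidableEq V] {S T : Finset V} :
    ∀ l : List V, HitsFirst S T l → HitsFirst (S ∪ T) (∅ : Finset V) l := by
  intro l
  induction l with
  | nil => exact fun h => h.elim
  | cons x xs ih =>
    cases xs with
    | nil =>
      intro h
      exact hitsFirst_single.mpr (Finset.mem_union_left _ (hitsFirst_single.mp h))
    | cons y ys =>
      intro h
      obtain ⟨h1, h2, h3⟩ := hitsFirst_cons.mp h
      exact hitsFirst_cons.mpr ⟨by simp [h1, h2], by simp, ih h3⟩

private lemma hitsFirst_not_both {S T : Finset V} (hST : Disjoint S T) :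
    ∀ l : List V, HitsFirst S T l → HitsFirst T S l → False := by
  intro l
  induction l with
  | nil => exact fun h _ => h.elim
  | cons x xs ih =>
    cases xs with
    | nil =>
      intro h h'
      exact Finset.disjoint_left.mp hST (hitsFirst_single.mp h) (hitsFirst_single.mp h')
    | cons y ys =>
      intro h h'
      exact ih (hitsFirst_cons.mp h).2.2 (hitsFirst_cons.mp h').2.2

open Classical in
private lemma hitProb_add_le_one [Fintype V] [DecidableEq V] {p : V → V → ℝ}
    (hp0 : ∀ x y, 0 ≤ p x y) (hp1 : ∀ x, ∑ y, p x y = 1) {A B : Finset V}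
    (hAB : Disjoint A B) (x : V) :
    hitProb p B A x + hitProb p A B x ≤ 1 := by
  have key : hitProb p B A x + hitProb p A B x ≤ hitProb p (A ∪ B) ∅ x := by
    rw [hitProb, hitProb, hitProb, ← ENNReal.tsum_add]
    refine ENNReal.tsum_le_tsum fun l => ?_
    by_cases h1 : HitsFirst B A (x :: l)
    · have h2 : ¬ HitsFirst A B (x :: l) := fun h2 => hitsFirst_not_both hAB _ h2 h1
      rw [if_pos h1, if_neg h2, add_zero, if_pos]
      have := hitsFirst_union _ h1
      rwa [Finset.union_comm] at this
    · rw [if_neg h1, zero_add]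
      by_cases h2 : HitsFirst A B (x :: l)
      · rw [if_pos h2, if_pos (hitsFirst_union _ h2)]
      · rw [if_neg h2]
        exact zero_le
  exact key.trans (hitProb_le_one hp0 hp1 _ _ x)

end Aux

-- `S` (with `S = A` or `S = B`) is reachable from `x` : there is a finite path of positive
-- transition probabilities from `x` to `S` whose interior nodes avoid `A ∪ B`.
def ReachableFrom {V : Type*} [DecidableEq V] (p : V → V → ℝ) (A B S : Finset V) (x : V) :
    Prop :=
  ∃ (k : ℕ) (c : ℕ → V), c 0 = x ∧ c k ∈ S ∧
    (∀ l, 1 ≤ l → l ≤ k - 1 → c l ∉ A ∪ B) ∧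
    ∀ l, l < k → 0 < p (c l) (c (l + 1))

-- Assumption 1 of the paper.
def Assumption1 {V : Type*} [Fintype V] [DecidableEq V] (p : V → V → ℝ) (A B : Finset V) :
    Prop :=
  ((A ∪ B)ᶜ : Finset V).Nonempty ∧
  (∀ x ∈ (A ∪ B)ᶜ, ReachableFrom p A B A x ∨ ReachableFrom p A B B x) ∧
  ∀ x ∈ A, ReachableFrom p A B B x

/-- Under Assumption 1, for every `x ∈ V` the committor
`q(x) = P(τ_{B,x} < τ_{A,x}) = hitProb p B A x` satisfies `q(x) < 1` if and only if
`x ∈ Bᶜ` and the set `A` is reachable from `x`. -/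
theorem committor_lt_one_iff {V : Type*} [Fintype V] [DecidableEq V]
    (p : V → V → ℝ) (A B : Finset V)
    (hAB : Disjoint A B) (hA : A.Nonempty) (hB : B.Nonempty)
    (hp0 : ∀ x y, 0 ≤ p x y) (hp1 : ∀ x, ∑ y, p x y = 1)
    (h1 : Assumption1 p A B) :
    ∀ x : V, hitProb p B A x < 1 ↔ (x ∉ B ∧ ReachableFrom p A B A x) := by
  classical
  intro x
  constructor
  · -- forward direction
    intro hlt
    by_cases hxB : x ∈ B
    · rw [hitProb_of_mem p hxB] at hlt
      exact absurd hlt (lt_irrefl _)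
    refine ⟨hxB, ?_⟩
    by_contra hreach
    -- the "bad" set where A is unreachable
    set S : Finset V := Finset.univ.filter
      (fun y => ¬ ReachableFrom p A B A y ∧ y ∉ B) with hSdef
    have hxS : x ∈ S := Finset.mem_filter.mpr ⟨Finset.mem_univ x, hreach, hxB⟩
    have hSne : S.Nonempty := ⟨x, hxS⟩
    -- basic facts about S
    have memS : ∀ y, y ∈ S ↔ (¬ ReachableFrom p A B A y ∧ y ∉ B) := by
      intro y
      simp [hSdef]
    have notA : ∀ y ∈ S, y ∉ A := by
      intro y hy hyA
      exact ((memS y).mp hy).1 ⟨0, fun _ => y, rfl, hyA,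
        fun l h1' h2' => absurd (h1'.trans h2') (by omega),
        fun l hl => absurd hl (by omega)⟩
    have closure : ∀ y ∈ S, ∀ z, 0 < p y z → z ∈ B ∨ z ∈ S := by
      intro y hy z hz
      by_cases hzB : z ∈ B
      · exact Or.inl hzB
      right
      refine (memS z).mpr ⟨?_, hzB⟩
      intro hzR
      have hzA : z ∉ A := by
        intro hzA
        refine ((memS y).mp hy).1 ⟨1, fun i => if i = 0 then y else z, by simp, by simp [hzA],
          fun l h1' h2' => absurd (h1'.trans h2') (by omega), ?_⟩
        intro l hl
        interval_cases l
        simpa using hz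
      obtain ⟨k, c, hc0, hck, hint, hpp⟩ := hzR
      refine ((memS y).mp hy).1 ⟨k + 1, fun i => Nat.casesOn i y c, rfl, hck, ?_, ?_⟩
      · intro l h1' h2'
        cases l with
        | zero => omega
        | succ j =>
          rcases Nat.eq_zero_or_pos j with hj | hj
          · subst hj
            simp only [Nat.casesOn]
            rw [hc0]
            simp [hzA, hzB]
          · exact hint j hj (by omega)
      · intro l hl
        cases l with
        | zero => simpa [hc0] using hz
        | succ j => exact hpp j (by omega)
    -- the infimum of the committor over S
    set q : V → ℝ≥0∞ := hitProb p B A with hqdef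
    set m : ℝ≥0∞ := S.inf' hSne q with hmdef
    have hm_le : ∀ y ∈ S, m ≤ q y := fun y hy => Finset.inf'_le q hy
    have hq_le : ∀ y, q y ≤ 1 := fun y => hitProb_le_one hp0 hp1 B A y
    have hm1 : m ≤ 1 := (hm_le x hxS).trans (hq_le x)
    -- forcing: a minimizer forces all its positive-probability successors to be minimizers
    have force : ∀ y ∈ S, q y = m → ∀ z, 0 < p y z → q z = m := by
      intro y hy hqy z hpz
      have hz_ge : m ≤ q z := by
        rcases closure y hy z hpz with hzB | hzS
        · rw [hqdef, hitProb_of_mem p hzB]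
          exact hm1
        · exact hm_le z hzS
      refine le_antisymm ?_ hz_ge
      by_contra hcon
      have hqz : m < q z := lt_of_not_ge hcon
      have hyB : y ∉ B := ((memS y).mp hy).2
      have hrec := hitProb_rec p B A y
      rw [if_neg hyB, if_neg (notA y hy)] at hrec
      set a : ℝ≥0∞ := ENNReal.ofReal (p y z) with hadef
      have ha0 : a ≠ 0 := (ENNReal.ofReal_pos.mpr hpz).ne'
      have ha_top : a ≠ ⊤ := ENNReal.ofReal_ne_top
      have hsum1 : ∑ z' : V, ENNReal.ofReal (p y z') = 1 := by
        rw [← ENNReal.ofReal_sum_of_nonneg (fun z' _ => hp0 y z'), hp1 y, ENNReal.ofReal_one]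
      have ha1 : a ≤ 1 := by
        rw [← hsum1]
        exact Finset.single_le_sum (f := fun z' => ENNReal.ofReal (p y z'))
          (fun _ _ => zero_le) (Finset.mem_univ z)
      have hsplit : m = a * q z + ∑ z' ∈ Finset.univ.erase z, ENNReal.ofReal (p y z') * q z' := by
        rw [← hqy, hqdef, hrec]
        exact (Finset.add_sum_erase _ _ (Finset.mem_univ z)).symm
      have hsum_erase : ∑ z' ∈ Finset.univ.erase z, ENNReal.ofReal (p y z') = 1 - a := by
        have := Finset.add_sum_erase Finset.univ (fun z' => ENNReal.ofReal (p y z'))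
          (Finset.mem_univ z)
        rw [hsum1] at this
        rw [← this]
        rw [ENNReal.add_sub_cancel_left ha_top]
      have hrest_ge : (1 - a) * m ≤ ∑ z' ∈ Finset.univ.erase z, ENNReal.ofReal (p y z') * q z' := by
        rw [← hsum_erase, Finset.sum_mul]
        refine Finset.sum_le_sum fun z' hz' => ?_
        by_cases hz0 : 0 < p y z'
        · refine mul_le_mul' le_rfl ?_
          rcases closure y hy z' hz0 with hzB | hzS
          · rw [hqdef, hitProb_of_mem p hzB]
            exact hm1
          · exact hm_le z' hzS
        · have : ENNReal.ofReal (p y z') = 0 := by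
            rw [ENNReal.ofReal_eq_zero]
            exact not_lt.mp hz0
          rw [this, zero_mul, zero_mul]
      have hfin : (1 - a) * m ≠ ⊤ :=
        (mul_le_one' (tsub_le_self.trans le_rfl) hm1).trans_lt ENNReal.one_lt_top |>.ne
      have : m < m := by
        calc m = a * q z + ∑ z' ∈ Finset.univ.erase z, ENNReal.ofReal (p y z') * q z' := hsplit
          _ ≥ a * q z + (1 - a) * m := add_le_add le_rfl hrest_ge
          _ > a * m + (1 - a) * m := by
              refine ENNReal.add_lt_add_right hfin ?_
              exact ENNReal.mul_lt_mul_right ha0 ha_top hqz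
          _ = (a + (1 - a)) * m := by rw [add_mul]
          _ = m := by rw [add_tsub_cancel_of_le ha1, one_mul]
      exact absurd this (lt_irrefl m)
    -- climb along a path to B from a minimizer
    obtain ⟨x₀, hx₀S, hx₀m⟩ := Finset.exists_mem_eq_inf' hSne q
    have hx₀AB : x₀ ∈ (A ∪ B)ᶜ := by
      simp only [Finset.mem_compl, Finset.mem_union, not_or]
      exact ⟨notA x₀ hx₀S, ((memS x₀).mp hx₀S).2⟩
    have hreachB : ReachableFrom p A B B x₀ := by
      rcases h1.2.1 x₀ hx₀AB with h | h
      · exact absurd h ((memS x₀).mp hx₀S).1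
      · exact h
    obtain ⟨k, c, hc0, hckB, hint, hpp⟩ := hreachB
    have climb : ∀ l, l ≤ k → m = 1 ∨ (c l ∈ S ∧ q (c l) = m) := by
      intro l
      induction l with
      | zero =>
        intro _
        right
        rw [hc0]
        exact ⟨hx₀S, hx₀m.symm⟩
      | succ l ih =>
        intro hl
        rcases ih (by omega) with h | ⟨hclS, hclq⟩
        · exact Or.inl h
        have hp' : 0 < p (c l) (c (l + 1)) := hpp l (by omega)
        rcases closure (c l) hclS _ hp' with hB' | hS'
        · left
          have hq1 := force (c l) hclS hclq _ hp'
          rw [hqdef, hitProb_of_mem p hB'] at hq1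
          exact hq1.symm
        · exact Or.inr ⟨hS', force (c l) hclS hclq _ hp'⟩
    rcases climb k le_rfl with hm | ⟨hkS, _⟩
    · have : (1 : ℝ≥0∞) ≤ q x := hm ▸ hm_le x hxS
      exact absurd hlt (not_lt.mpr this)
    · exact ((memS (c k)).mp hkS).2 hckB
  · -- backward direction
    rintro ⟨hxB, hreach⟩
    have hpos : 0 < hitProb p A B x := by
      obtain ⟨k, c, hc0, hck, hint, hpp⟩ := hreach
      have := pos_of_path (B := B) k c hck hint hpp (hc0 ▸ hxB)
      rwa [hc0] at this
    have hsum := hitProb_add_le_one hp0 hp1 hAB x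
    have hle := hitProb_le_one hp0 hp1 B A x
    rcases lt_or_eq_of_le hle with h | h
    · exact h
    · exfalso
      rw [h] at hsum
      have hzero : hitProb p A B x = 0 := by
        by_contra hne
        exact absurd hsum (not_le.mpr (ENNReal.lt_add_right ENNReal.one_ne_top hne))
      exact absurd hzero hpos.ne'
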